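/- The uniform morphism φ on {1,2,3} with φ(1)=1221, φ(2)=2332, φ(3)=3113 is overlap-free: the image of every overlap-free word is overlap-free. -/

import Mathlib

/-- A square: a word of the form `x ++ x` with `x` nonempty. -/
def IsSq {α : Type*} (w : List α) : Prop := ∃ x : List α, x ≠ [] ∧ w = x ++ x

/-- A cube: a word of the form `x ++ x ++ x` with `x` nonempty. -/
def IsCube {α : Type*} (w : List α) : Prop := ∃ x : List α, x ≠ [] ∧ w = x ++ x ++ x

/-- A weak square: a word of the form `a ++ x ++ x ++ a` with `a` a letter. -/
def IsWeakSq {α : Type*} (w : List α) : Prop :=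
  ∃ (a : α) (x : List α), w = a :: (x ++ x ++ [a])

/-- An overlap: a word of the form `a ++ x ++ a ++ x ++ a`. -/
def IsOverlap {α : Type*} (w : List α) : Prop :=
  ∃ (a : α) (x : List α), w = a :: (x ++ a :: x ++ [a])

def SqFree {α : Type*} (w : List α) : Prop := ∀ v, v <:+: w → ¬ IsSq v
def CubeFree {α : Type*} (w : List α) : Prop := ∀ v, v <:+: w → ¬ IsCube v
def WeakSqFree {α : Type*} (w : List α) : Prop := ∀ v, v <:+: w → ¬ IsWeakSq v
def OverlapFree {α : Type*} (w : List α) : Prop := ∀ v, v <:+: w → ¬ IsOverlap v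

/-- Applying the morphism determined by letter images `φ` to a finite word. -/
def applyM {α : Type*} (φ : α → List α) (w : List α) : List α := (w.map φ).flatten

def phi : Fin 3 → List (Fin 3) := ![[0,1,1,0], [1,2,2,1], [2,0,0,2]]

/-! ### Auxiliary material -/

lemma phi_len (c : Fin 3) : (phi c).length = 4 := by fin_cases c <;> rfl

/-- The `r`-th letter of the image block of `c`. -/
def blk (c : Fin 3) (r : ℕ) : Fin 3 := (phi c).getD r 0

lemma applyM_cons (c : Fin 3) (w : List (Fin 3)) :
    applyM phi (c :: w) = phi c ++ applyM phi w := by simp [applyM]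

lemma applyM_append (u v : List (Fin 3)) :
    applyM phi (u ++ v) = applyM phi u ++ applyM phi v := by simp [applyM]

lemma len_applyM (w : List (Fin 3)) : (applyM phi w).length = 4 * w.length := by
  induction w with
  | nil => rfl
  | cons c w ih =>
    rw [applyM_cons, List.length_append, phi_len, ih, List.length_cons]; ring

lemma getA : ∀ (W : List (Fin 3)) (j : ℕ), j < W.length → ∀ r : ℕ, r < 4 →
    (applyM phi W).getD (4*j+r) 0 = blk (W.getD j 0) r := by
  intro W
  induction W with
  | nil => intro j hj; simp at hj
  | cons c W ih =>
    intro j hj r hr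
    cases j with
    | zero =>
      rw [applyM_cons, List.getD_append _ _ _ _ (by rw [phi_len]; omega)]
      have e : 4*0+r = r := by omega
      rw [e]; rfl
    | succ j =>
      rw [applyM_cons, List.getD_append_right _ _ _ _ (by rw [phi_len]; omega)]
      have e : 4*(j+1)+r - (phi c).length = 4*j+r := by rw [phi_len]; omega
      rw [e]
      exact ih j (by simpa using hj) r hr

lemma detect (W : List (Fin 3)) (u : ℕ) (hu1 : 1 ≤ u) (hu2 : u + 1 < 4 * W.length)
    (h1 : (applyM phi W).getD u 0 = (applyM phi W).getD (u+1) 0)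
    (h2 : (applyM phi W).getD u 0 = (applyM phi W).getD (u-1) 0 + 1) :
    u % 4 = 1 := by
  have hjn : u / 4 < W.length := by omega
  have hr4 : u % 4 = 0 ∨ u % 4 = 1 ∨ u % 4 = 2 ∨ u % 4 = 3 := by omega
  rcases hr4 with h | h | h | h
  · exfalso
    have q1 := getA W (u/4) hjn 0 (by omega)
    have q2 := getA W (u/4) hjn 1 (by omega)
    rw [show 4*(u/4)+0 = u from by omega] at q1
    rw [show 4*(u/4)+1 = u+1 from by omega] at q2
    rw [q1, q2] at h1
    exact (by decide : ∀ c : Fin 3, blk c 0 ≠ blk c 1) _ h1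
  · exact h
  · exfalso
    have q1 := getA W (u/4) hjn 2 (by omega)
    have q2 := getA W (u/4) hjn 3 (by omega)
    rw [show 4*(u/4)+2 = u from by omega] at q1
    rw [show 4*(u/4)+3 = u+1 from by omega] at q2
    rw [q1, q2] at h1
    exact (by decide : ∀ c : Fin 3, blk c 2 ≠ blk c 3) _ h1
  · exfalso
    have q1 := getA W (u/4) hjn 3 (by omega)
    have q2 := getA W (u/4) hjn 2 (by omega)
    rw [show 4*(u/4)+3 = u from by omega] at q1
    rw [show 4*(u/4)+2 = u-1 from by omega] at q2
    rw [q1, q2] at h2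
    exact (by decide : ∀ c : Fin 3, blk c 3 ≠ blk c 2 + 1) _ h2

lemma getD_take_drop (l : List (Fin 3)) (a m k : ℕ) (hk : k < m) (h : a + k < l.length) :
    ((l.drop a).take m).getD k 0 = l.getD (a+k) 0 := by
  have h1 : k < ((l.drop a).take m).length := by
    simp only [List.length_take, List.length_drop]; omega
  rw [List.getD_eq_getElem _ _ h1, List.getD_eq_getElem _ _ h,
    List.getElem_take, List.getElem_drop]

lemma ext_getD (l1 l2 : List (Fin 3)) (hl : l1.length = l2.length)
    (h : ∀ k, k < l1.length → l1.getD k 0 = l2.getD k 0) : l1 = l2 :=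
  List.ext_getElem hl (fun n h1 h2 => by
    have := h n h1
    rwa [List.getD_eq_getElem _ _ h1, List.getD_eq_getElem _ _ h2] at this)

/-! ### Finite enumeration and decidability -/

def words : ℕ → List (List (Fin 3))
  | 0 => [[]]
  | n+1 => (words n).flatMap fun w => [0 :: w, 1 :: w, 2 :: w]

lemma mem_words : ∀ (n : ℕ) (w : List (Fin 3)), w.length = n → w ∈ words n := by
  intro n
  induction n with
  | zero =>
    intro w h
    have := List.length_eq_zero_iff.mp h
    subst this; simp [words]
  | succ n ih =>
    intro w h
    cases w with
    | nil => simp at h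
    | cons c w' =>
      have hw' : w' ∈ words n := ih w' (by simpa using h)
      show c :: w' ∈ words (n+1)
      simp only [words, List.mem_flatMap]
      exact ⟨w', hw', by fin_cases c <;> simp⟩

def wordsLe3 : List (List (Fin 3)) := words 0 ++ words 1 ++ words 2 ++ words 3

lemma mem_wordsLe3 (w : List (Fin 3)) (h : w.length ≤ 3) : w ∈ wordsLe3 := by
  have h4 : w.length = 0 ∨ w.length = 1 ∨ w.length = 2 ∨ w.length = 3 := by omega
  simp only [wordsLe3, List.mem_append]
  rcases h4 with h|h|h|h
  · exact Or.inl (Or.inl (Or.inl (mem_words _ _ h)))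
  · exact Or.inl (Or.inl (Or.inr (mem_words _ _ h)))
  · exact Or.inl (Or.inr (mem_words _ _ h))
  · exact Or.inr (mem_words _ _ h)

instance decIsOverlap (v : List (Fin 3)) : Decidable (IsOverlap v) :=
  decidable_of_iff (∃ u ∈ v.inits, u ≠ [] ∧ v = u ++ u ++ [u.headI]) (by
    constructor
    · rintro ⟨u, -, hne, hv⟩
      obtain ⟨b, L, rfl⟩ := List.exists_cons_of_ne_nil hne
      exact ⟨b, L, by simpa using hv⟩
    · rintro ⟨b, L, rfl⟩
      refine ⟨b :: L, ?_, by simp, by simp⟩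
      rw [List.mem_inits]
      exact ⟨b :: L ++ [b], by simp⟩)

instance decOverlapFree (w : List (Fin 3)) : Decidable (OverlapFree w) :=
  decidable_of_iff (∀ t ∈ w.tails, ∀ u ∈ t.inits, ¬ IsOverlap u) (by
    constructor
    · intro h v hv
      rw [List.infix_iff_prefix_suffix] at hv
      obtain ⟨t, hp, hs⟩ := hv
      exact h t ((List.mem_tails _ _).2 hs) v ((List.mem_inits _ _).2 hp)
    · intro h t ht u hu
      exact h u (List.infix_iff_prefix_suffix.2
        ⟨t, (List.mem_inits _ _).1 hu, (List.mem_tails _ _).1 ht⟩))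

lemma check : ∀ w ∈ wordsLe3, OverlapFree w → OverlapFree (applyM phi w) := by decide

/-! ### Main theorem -/

theorem stmt6 : ∀ W : List (Fin 3), OverlapFree W → OverlapFree (applyM phi W) := by
  intro W hW v hv hov
  obtain ⟨a, X, hveq⟩ := hov
  obtain ⟨s, t, hst⟩ := hv
  set n := W.length with hn
  set p := X.length + 1 with hp
  set i := s.length with hi
  set A := applyM phi W with hA
  have hAlen : A.length = 4 * n := len_applyM W
  have hvlen : v.length = 2 * p + 1 := by
    rw [hveq]; simp [hp]; omega
  have hiv : i + (2*p+1) ≤ 4*n := by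
    have := congrArg List.length hst
    simp only [List.length_append] at this
    omega
  have fmem : ∀ k, k < 2*p+1 → A.getD (i+k) 0 = v.getD k 0 := by
    intro k hk
    rw [← hst, List.append_assoc, List.getD_append_right _ _ _ _ (by omega : s.length ≤ i + k)]
    rw [show i + k - s.length = k from by omega]
    rw [List.getD_append _ _ _ _ (by omega)]
  have vper : ∀ d, d ≤ p → v.getD d 0 = v.getD (d+p) 0 := by
    intro d hd
    have hu : v = (a :: X) ++ ((a :: X) ++ [a]) := by rw [hveq]; simp
    have hulen : (a :: X).length = p := by simp [hp]
    rcases Nat.lt_or_ge d p with hdp | hdp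
    · rw [hu, List.getD_append _ _ _ _ (by omega),
        List.getD_append_right _ _ _ _ (by omega)]
      rw [show d + p - (a::X).length = d from by omega]
      rw [List.getD_append _ _ _ _ (by omega)]
    · have hdp' : d = p := le_antisymm hd hdp
      subst hdp'
      have hL : v.getD p 0 = a := by
        rw [hu, List.getD_append_right _ _ _ _ (by omega : (a::X).length ≤ p)]
        rw [show p - (a::X).length = 0 from by omega]
        rfl
      have hR : v.getD (p+p) 0 = a := by
        rw [hu, List.getD_append_right _ _ _ _ (by omega : (a::X).length ≤ p+p)]
        rw [show p + p - (a::X).length = p from by omega]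
        rw [List.getD_append_right _ _ _ _ (by omega : (a::X).length ≤ p)]
        rw [show p - (a::X).length = 0 from by omega]
        rfl
      exact hL.trans hR.symm
  have fper : ∀ d, d ≤ p → A.getD (i+d) 0 = A.getD (i+d+p) 0 := by
    intro d hd
    rw [fmem d (by omega), show i + d + p = i + (d + p) from by ring,
      fmem (d+p) (by omega), vper d hd]
  by_cases hps : p ≤ 4
  · -- short case: the overlap fits in the image of ≤ 3 letters
    set j0 := i / 4 with hj0
    set j1 := (i + 2*p) / 4 with hj1
    set m := j1 + 1 - j0 with hm
    have hmle : m ≤ 3 := by omega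
    have hj1n : j1 + 1 ≤ n := by omega
    set w := (W.drop j0).take m with hw
    have hwinf : w <:+: W :=
      (List.take_prefix m (W.drop j0)).isInfix.trans (List.drop_suffix j0 W).isInfix
    have hwlen : w.length = m := by
      rw [hw]; simp only [List.length_take, List.length_drop]; omega
    have hdw : w ++ W.drop (j0 + m) = W.drop j0 := by
      rw [hw, ← List.drop_drop (i := m) (j := j0) (l := W), List.take_append_drop]
    have hWdec : W = W.take j0 ++ (w ++ W.drop (j0 + m)) := by
      rw [hdw, List.take_append_drop]
    have hAdec : A = applyM phi (W.take j0) ++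
        (applyM phi w ++ applyM phi (W.drop (j0+m))) := by
      rw [hA]
      conv_lhs => rw [hWdec]
      rw [applyM_append, applyM_append]
    have hPlen : (applyM phi (W.take j0)).length = 4 * j0 := by
      rw [len_applyM, List.length_take]; omega
    have hMlen : (applyM phi w).length = 4 * m := by rw [len_applyM, hwlen]
    have hvdt : v = (A.drop i).take (2*p+1) := by
      rw [← hst, List.append_assoc, hi, List.drop_left, ← hvlen, List.take_left]
    have hvM : v = ((applyM phi w).drop (i - 4*j0)).take (2*p+1) := by
      rw [hvdt]
      conv_lhs =>
        rw [hAdec,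
          show i = (applyM phi (W.take j0)).length + (i - 4*j0) from by rw [hPlen]; omega]
      rw [List.drop_length_add_append, List.drop_append,
        List.take_append]
      have hlen2 : (2*p+1) - ((applyM phi w).drop (i - 4*j0)).length = 0 := by
        simp only [List.length_drop, hMlen]; omega
      rw [hlen2]
      simp
    have hvinf : v <:+: applyM phi w := by
      rw [hvM]
      exact (List.take_prefix _ _).isInfix.trans (List.drop_suffix _ _).isInfix
    have hwOF : OverlapFree w := fun u hu => hW u (hu.trans hwinf)
    exact check w (mem_wordsLe3 w (by omega)) hwOF v hvinf ⟨a, X, hveq⟩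
  · -- long case: p ≥ 5
    push_neg at hps
    set j0 := i / 4 with hj0
    set tt := if i % 4 = 0 then i + 1 else 4*j0 + 5 with htt
    have htt1 : tt % 4 = 1 := by rw [htt]; split <;> omega
    have httlb : i + 1 ≤ tt := by rw [htt]; split <;> omega
    have httub : tt ≤ i + p - 1 := by rw [htt]; split <;> omega
    have htk : tt = 4*(tt/4) + 1 := by omega
    have hkn : tt/4 < n := by omega
    have g1 : A.getD tt 0 = blk (W.getD (tt/4) 0) 1 := by
      have := getA W (tt/4) hkn 1 (by omega); rwa [← htk] at this
    have g2 : A.getD (tt+1) 0 = blk (W.getD (tt/4) 0) 2 := by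
      have := getA W (tt/4) hkn 2 (by omega)
      rwa [show 4*(tt/4)+2 = tt+1 from by omega] at this
    have g0 : A.getD (tt-1) 0 = blk (W.getD (tt/4) 0) 0 := by
      have := getA W (tt/4) hkn 0 (by omega)
      rwa [show 4*(tt/4)+0 = tt-1 from by omega] at this
    have e1 : A.getD (tt+p) 0 = A.getD (tt+p+1) 0 := by
      have p1 := fper (tt - i) (by omega)
      have p2 := fper (tt + 1 - i) (by omega)
      rw [show i + (tt - i) = tt from by omega] at p1
      rw [show i + (tt+1-i) = tt+1 from by omega] at p2
      rw [show tt + 1 + p = tt+p+1 from by omega] at p2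
      rw [← p1, ← p2, g1, g2]
      exact (by decide : ∀ c : Fin 3, blk c 1 = blk c 2) _
    have e2 : A.getD (tt+p) 0 = A.getD (tt+p-1) 0 + 1 := by
      have p1 := fper (tt - i) (by omega)
      have p0 := fper (tt - 1 - i) (by omega)
      rw [show i + (tt - i) = tt from by omega] at p1
      rw [show i + (tt-1-i) = tt-1 from by omega] at p0
      rw [show tt - 1 + p = tt+p-1 from by omega] at p0
      rw [← p1, ← p0, g1, g0]
      exact (by decide : ∀ c : Fin 3, blk c 1 = blk c 0 + 1) _
    have hd := detect W (tt+p) (by omega) (by omega) e1 e2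
    have hp4 : p % 4 = 0 := by omega
    set q := p / 4 with hq
    have hpq : p = 4*q := by omega
    have hq1 : 1 ≤ q := by omega
    have binj : ∀ c d : Fin 3, ∀ r : Fin 4, blk c r.val = blk d r.val → c = d := by decide
    have hblk : ∀ j, j0 ≤ j → j ≤ j0 + q → W.getD j 0 = W.getD (j+q) 0 := by
      intro j hji hjq
      have hjn : j < n := by omega
      have hjqn : j + q < n := by omega
      have q1 := getA W j hjn (i % 4) (by omega)
      have q2 := getA W (j+q) hjqn (i % 4) (by omega)
      have pd := fper (4*(j - j0)) (by omega)
      rw [show i + 4*(j-j0) = 4*j + i%4 from by omega,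
        show 4*j + i%4 + p = 4*(j+q) + i%4 from by omega] at pd
      rw [q1, q2] at pd
      exact binj _ _ ⟨i % 4, by omega⟩ pd
    have hend : j0 + 2*q < n := by omega
    set z := (W.drop j0).take q with hz
    have hzlen : z.length = q := by
      rw [hz]; simp only [List.length_take, List.length_drop]; omega
    have hzne : z ≠ [] := by
      intro h; rw [h] at hzlen; simp at hzlen; omega
    obtain ⟨b, Y, hbY⟩ := List.exists_cons_of_ne_nil hzne
    have hbW : b = W.getD j0 0 := by
      have h0 := getD_take_drop W j0 q 0 (by omega) (by omega)
      rw [← hz, hbY] at h0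
      simpa using h0
    have hslice : (W.drop j0).take (2*q+1) = z ++ z ++ [b] := by
      apply ext_getD
      · simp only [List.length_take, List.length_drop, List.length_append,
          List.length_cons, List.length_nil, hzlen]
        omega
      · intro k hk
        have hk' : k < 2*q+1 := by
          simp only [List.length_take, List.length_drop] at hk; omega
        rw [getD_take_drop W j0 (2*q+1) k hk' (by omega)]
        rcases Nat.lt_or_ge k q with h1 | h1
        · rw [List.getD_append _ _ _ _ (by simp [hzlen]; omega),
            List.getD_append _ _ _ _ (by rw [hzlen]; omega)]
          rw [hz, getD_take_drop W j0 q k h1 (by omega)]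
        · rcases Nat.lt_or_ge k (2*q) with h2 | h2
          · rw [List.getD_append _ _ _ _ (by simp [hzlen]; omega),
              List.getD_append_right _ _ _ _ (by rw [hzlen]; omega)]
            rw [hzlen, hz, getD_take_drop W j0 q (k-q) (by omega) (by omega)]
            have hb := hblk (j0 + (k - q)) (by omega) (by omega)
            rw [show j0 + (k-q) + q = j0 + k from by omega] at hb
            exact hb.symm
          · have hk2 : k = 2*q := by omega
            subst hk2
            rw [List.getD_append_right _ _ _ _ (by simp [hzlen]; omega)]
            rw [show 2*q - (z++z).length = 0 from by simp [hzlen]; omega]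
            have t1 := hblk j0 (le_refl _) (by omega)
            have t2 := hblk (j0+q) (by omega) (by omega)
            rw [show j0 + q + q = j0 + 2*q from by omega] at t2
            simp only [List.getD_cons_zero]
            rw [hbW]
            exact (t1.trans t2).symm
    have hinf : (W.drop j0).take (2*q+1) <:+: W :=
      (List.take_prefix _ _).isInfix.trans (List.drop_suffix _ _).isInfix
    exact hW _ hinf ⟨b, Y, by rw [hslice, hbY]; simp⟩
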